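/- Let X be a complete length space, p ∈ X, and r > 0. Assume that G(p,r,2r) is finitely generated and that the image Im{ π₁(B̄_p(r), p) → π₁(X, p) } of the inclusion-induced homomorphism is a finitely presented group. Then ρ_p(r) < ∞; that is, there exists R > 0 such that every loop based at p with image in the closed ball B̄_p(r) that is nullhomotopic in X is nullhomotopic inside the open ball B_p(R). -/

import Mathlib

open Metric unitInterval CategoryTheory
open scoped FundamentalGroupoid ENNReal Manifold

universe u

noncomputable section

/-- The length of a path in a pseudo-emetric space, as the total variation of the
parametrization. -/
def pathLength {X : Type u} [PseudoEMetricSpace X] {x y : X} (γ : Path x y) : ℝ≥0∞ :=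
  eVariationOn γ Set.univ

/-- A (pseudo-e)metric space is a *length space* if the distance between any two points is
the infimum of the lengths of paths joining them. -/
def IsLengthSpace (X : Type u) [PseudoEMetricSpace X] : Prop :=
  ∀ x y : X, edist x y = ⨅ γ : Path x y, pathLength γ

/-- Two loops are homotopic (rel endpoints) *within* the set `S` if there is a path homotopy
between them whose image is contained in `S`. -/
def HomotopicIn {X : Type u} [TopologicalSpace X] {x y : X} (γ₁ γ₂ : Path x y) (S : Set X) :
    Prop :=
  ∃ H : Path.Homotopy γ₁ γ₂, ∀ z : I × I, H z ∈ S

/-- A loop is nullhomotopic within the set `S`. -/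
def NullHomotopicIn {X : Type u} [TopologicalSpace X] {x : X} (γ : Path x x) (S : Set X) :
    Prop :=
  HomotopicIn γ (Path.refl x) S

/-- The homomorphism on fundamental groups induced by a continuous map. -/
def indHom {X Y : Type u} [TopologicalSpace X] [TopologicalSpace Y]
    (f : C(X, Y)) (x : X) : FundamentalGroup X x →* FundamentalGroup Y (f x) :=
  Functor.mapEnd (FundamentalGroupoid.mk x)
    (πₘ (show TopCat.of X ⟶ TopCat.of Y from TopCat.ofHom f))

/-- The class of a loop in the fundamental group. -/
def pathClass {X : Type u} [TopologicalSpace X] {x : X} (γ : Path x x) :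
    FundamentalGroup X x :=
  @FundamentalGroup.fromPath (TopCat.of X) _ x ⟦γ⟧

/-- The basepoint `p` as a point of the closed ball `B̄_p(r)`. -/
def pcb {X : Type u} [MetricSpace X] (p : X) {r : ℝ} (h0 : 0 ≤ r) : closedBall p r :=
  ⟨p, mem_closedBall_self h0⟩

/-- The basepoint `p` as a point of the open ball `B_p(R)`. -/
def ctr {X : Type u} [MetricSpace X] (p : X) {R : ℝ} (hR : 0 < R) : ball p R :=
  ⟨p, mem_ball_self hR⟩

/-- The inclusion of the closed ball `B̄_p(r)` into the open ball `B_p(R)`, `r < R`. -/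
def cbInclusion {X : Type u} [MetricSpace X] (p : X) {r R : ℝ} (h : r < R) :
    C(closedBall p r, ball p R) :=
  ⟨fun z => ⟨z.1, mem_ball.mpr (lt_of_le_of_lt (mem_closedBall.mp z.2) h)⟩,
    Continuous.subtype_mk continuous_subtype_val _⟩

/-- The geometric semi-local fundamental group `G(p,r,R)`: the image of
`π₁(B̄_p(r), p) → π₁(B_p(R), p)`, as a subgroup of `π₁(B_p(R), p)`. -/
def G {X : Type u} [MetricSpace X] (p : X) {r R : ℝ} (h0 : 0 ≤ r) (hrR : r < R) :
    Subgroup (FundamentalGroup (ball p R) (ctr p (h0.trans_lt hrR))) :=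
  (indHom (cbInclusion p hrR) (pcb p h0)).range

/-- The homomorphism `π₁(B_p(R), p) → π₁(X, p)` induced by inclusion. -/
def toAmb {X : Type u} [MetricSpace X] (p : X) {R : ℝ} (hR : 0 < R) :
    FundamentalGroup (ball p R) (ctr p hR) →* FundamentalGroup X p :=
  indHom ⟨Subtype.val, continuous_subtype_val⟩ (ctr p hR)

/-- The homomorphism `π₁(B̄_p(r), p) → π₁(X, p)` induced by inclusion. -/
def cbToAmb {X : Type u} [MetricSpace X] (p : X) {r : ℝ} (h0 : 0 ≤ r) :
    FundamentalGroup (closedBall p r) (pcb p h0) →* FundamentalGroup X p :=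
  indHom ⟨Subtype.val, continuous_subtype_val⟩ (pcb p h0)

end

/-- A group is finitely presented. -/
def IsFinitelyPresented (G : Type*) [Group G] : Prop :=
  ∃ (m : ℕ) (rels : Set (FreeGroup (Fin m))), rels.Finite ∧ Nonempty (PresentedGroup rels ≃* G)

section AuxPath

open CategoryTheory

variable {X : Type u} {Y : Type u} [TopologicalSpace X] [TopologicalSpace Y]

lemma pathClass_hom {x : X} (γ : Path x x) :
    (pathClass γ : Path.Homotopic.Quotient x x) = (⟦γ⟧ : Path.Homotopic.Quotient x x) := rfl

lemma aut_ext {C : Type*} [Category C] {c : C} {a b : Aut c} (h : a.hom = b.hom) : a = b :=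
  Iso.ext h

lemma exists_path {x : X} (g : FundamentalGroup X x) : ∃ γ : Path x x, pathClass γ = g := by
  obtain ⟨γ, hγ⟩ := Quotient.exists_rep (show Path.Homotopic.Quotient x x from g)
  exact ⟨γ, hγ⟩

lemma pathClass_eq_iff {x : X} (γ₁ γ₂ : Path x x) :
    pathClass γ₁ = pathClass γ₂ ↔ γ₁.Homotopic γ₂ := by
  constructor
  · intro h
    exact Quotient.exact h
  · intro h
    exact Quotient.sound h

lemma pathClass_refl (x : X) : pathClass (Path.refl x) = 1 := by
  show (⟦Path.refl x⟧ : Path.Homotopic.Quotient x x) = 𝟙 (FundamentalGroupoid.mk x)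
  exact (FundamentalGroupoid.id_eq_path_refl _).symm

lemma indHom_pathClass (f : C(X, Y)) (x : X) (γ : Path x x) :
    indHom f x (pathClass γ) = pathClass (γ.map f.continuous) := by
  show (πₘ (show TopCat.of X ⟶ TopCat.of Y from TopCat.ofHom f)).map (⟦γ⟧ : Path.Homotopic.Quotient x x)
      = ⟦γ.map f.continuous⟧
  exact (Path.Homotopic.Quotient.mk_map γ f).symm

end AuxPath
section AuxHomotopy

variable {X : Type u} [TopologicalSpace X]

/-- Restrict a path to a subset containing its image. -/
def pathIn {x y : X} (γ : Path x y) {S : Set X} (hx : x ∈ S) (hy : y ∈ S)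
    (h : ∀ t, γ t ∈ S) : Path (⟨x, hx⟩ : S) ⟨y, hy⟩ where
  toFun t := ⟨γ t, h t⟩
  continuous_toFun := γ.continuous.subtype_mk _
  source' := Subtype.ext γ.source
  target' := Subtype.ext γ.target

@[simp] lemma pathIn_map_val {x y : X} (γ : Path x y) {S : Set X} (hx : x ∈ S) (hy : y ∈ S)
    (h : ∀ t, γ t ∈ S) : (pathIn γ hx hy h).map continuous_subtype_val = γ := by
  ext t; rfl

/-- Lift a homotopy with image in `S` to the subtype `S`. -/
lemma homotopic_pathIn {x y : X} {γ₁ γ₂ : Path x y} (H : Path.Homotopy γ₁ γ₂)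
    {S : Set X} (hS : ∀ z, H z ∈ S) (hx : x ∈ S) (hy : y ∈ S)
    (h₁ : ∀ t, γ₁ t ∈ S) (h₂ : ∀ t, γ₂ t ∈ S) :
    (pathIn γ₁ hx hy h₁).Homotopic (pathIn γ₂ hx hy h₂) := by
  refine ⟨{ toFun := fun z => ⟨H z, hS z⟩
            continuous_toFun := H.continuous.subtype_mk _
            map_zero_left := fun t => Subtype.ext (H.apply_zero t)
            map_one_left := fun t => Subtype.ext (H.apply_one t)
            prop' := fun t s hs => Subtype.ext ?_ }⟩
  exact H.prop' t s hs

/-- Push a homotopy in the subtype `S` down to `X`. -/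
def homotopyOut {S : Set X} {a b : S} {δ₁ δ₂ : Path a b}
    (H : Path.Homotopy δ₁ δ₂) :
    Path.Homotopy (δ₁.map continuous_subtype_val) (δ₂.map continuous_subtype_val) where
  toFun z := (H z : X)
  continuous_toFun := continuous_subtype_val.comp H.continuous
  map_zero_left t := congrArg Subtype.val (H.apply_zero t)
  map_one_left t := congrArg Subtype.val (H.apply_one t)
  prop' t s hs := congrArg Subtype.val (H.prop' t s hs)

@[simp] lemma homotopyOut_apply {S : Set X} {a b : S} {δ₁ δ₂ : Path a b}
    (H : Path.Homotopy δ₁ δ₂) (z : I × I) : homotopyOut H z = (H z : X) := rfl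

section AuxGroup

open Subgroup

lemma tietze {Γ : Type*} [Group Γ] (hfp : IsFinitelyPresented Γ) {ι : Type*} [Finite ι]
    (φ : FreeGroup ι →* Γ) (hφ : Function.Surjective φ) :
    ∃ T : Set (FreeGroup ι), T.Finite ∧ (∀ t ∈ T, φ t = 1) ∧
      φ.ker ≤ Subgroup.normalClosure T := by
  obtain ⟨m, rels, hrels, ⟨e⟩⟩ := hfp
  let ψ : FreeGroup (Fin m) →* Γ := e.toMonoidHom.comp (PresentedGroup.mk rels)
  have hψs : Function.Surjective ψ := e.surjective.comp (PresentedGroup.mk_surjective rels)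
  have hψk : ∀ u, ψ u = 1 ↔ u ∈ Subgroup.normalClosure rels := by
    intro u
    rw [show ψ u = e (PresentedGroup.mk rels u) from rfl, EmbeddingLike.map_eq_one_iff]
    exact QuotientGroup.eq_one_iff u
  let α : FreeGroup (Fin m) →* FreeGroup ι :=
    FreeGroup.lift fun j => Classical.choose (hφ (ψ (FreeGroup.of j)))
  have hα : ∀ j, φ (α (FreeGroup.of j)) = ψ (FreeGroup.of j) := by
    intro j
    simp only [α, FreeGroup.lift_apply_of]
    exact Classical.choose_spec (hφ (ψ (FreeGroup.of j)))
  have hαψ : φ.comp α = ψ := FreeGroup.ext_hom _ _ hα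
  let β : FreeGroup ι →* FreeGroup (Fin m) :=
    FreeGroup.lift fun i => Classical.choose (hψs (φ (FreeGroup.of i)))
  have hβ : ∀ i, ψ (β (FreeGroup.of i)) = φ (FreeGroup.of i) := by
    intro i
    simp only [β, FreeGroup.lift_apply_of]
    exact Classical.choose_spec (hψs (φ (FreeGroup.of i)))
  have hβφ : ψ.comp β = φ := FreeGroup.ext_hom _ _ hβ
  refine ⟨(α '' rels) ∪ Set.range (fun i : ι => (FreeGroup.of i)⁻¹ * α (β (FreeGroup.of i))),
    (hrels.image α).union (Set.finite_range _), ?_, ?_⟩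
  · rintro t (⟨u, hu, rfl⟩ | ⟨i, rfl⟩)
    · have : ψ u = 1 := (hψk u).mpr (Subgroup.subset_normalClosure hu)
      rw [show φ (α u) = ψ u from DFunLike.congr_fun hαψ u, this]
    · rw [map_mul, map_inv, show φ (α (β (FreeGroup.of i))) = ψ (β (FreeGroup.of i)) from
        DFunLike.congr_fun hαψ _, hβ i, inv_mul_cancel]
  · set T := (α '' rels) ∪ Set.range (fun i : ι => (FreeGroup.of i)⁻¹ * α (β (FreeGroup.of i)))
      with hT
    set N := Subgroup.normalClosure T with hN
    have hNn : N.Normal := Subgroup.normalClosure_normal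
    let q : FreeGroup ι →* FreeGroup ι ⧸ N := QuotientGroup.mk' N
    have hq : q.comp (α.comp β) = q := by
      refine FreeGroup.ext_hom _ _ fun i => ?_
      have ht : (FreeGroup.of i)⁻¹ * α (β (FreeGroup.of i)) ∈ N :=
        Subgroup.subset_normalClosure (Or.inr ⟨i, rfl⟩)
      have h1 : q ((FreeGroup.of i)⁻¹ * α (β (FreeGroup.of i))) = 1 := by
        rw [← MonoidHom.mem_ker, QuotientGroup.ker_mk']; exact ht
      have : q (FreeGroup.of i * ((FreeGroup.of i)⁻¹ * α (β (FreeGroup.of i))))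
          = q (FreeGroup.of i) := by rw [map_mul, h1, mul_one]
      simpa [mul_inv_cancel_left] using this
    intro w hw
    have h1 : ψ (β w) = 1 := by
      rw [show ψ (β w) = φ w from DFunLike.congr_fun hβφ w]
      exact hw
    have h2 : β w ∈ Subgroup.normalClosure rels := (hψk _).mp h1
    have h3 : α (β w) ∈ N := by
      have hle : Subgroup.normalClosure rels ≤ Subgroup.comap α N := by
        have : (Subgroup.comap α N).Normal := Subgroup.Normal.comap hNn α
        refine Subgroup.normalClosure_le_normal ?_
        intro u hu
        exact Subgroup.subset_normalClosure (Or.inl ⟨u, hu, rfl⟩)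
      exact hle h2
    have h4 : q w = q (α (β w)) := (DFunLike.congr_fun hq w).symm
    have h5 : q w = 1 := by
      rw [h4, ← MonoidHom.mem_ker, QuotientGroup.ker_mk']
      exact h3
    rw [← MonoidHom.mem_ker (f := q), QuotientGroup.ker_mk'] at h5
    exact h5

section AuxGeo

open Bornology

variable {X : Type u} [MetricSpace X]

/-- Inclusion of a smaller open ball into a bigger one. -/
def ballInc (p : X) {a b : ℝ} (h : a ≤ b) : C(ball p a, ball p b) :=
  ⟨fun z => ⟨z.1, mem_ball.mpr (lt_of_lt_of_le (mem_ball.mp z.2) h)⟩,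
    continuous_subtype_val.subtype_mk _⟩

lemma vanish (p : X) {r₂ : ℝ} (h2 : 0 < r₂)
    (g : FundamentalGroup (ball p r₂) (ctr p h2)) (hg : toAmb p h2 g = 1) :
    ∃ R₀ : ℝ, r₂ + 1 ≤ R₀ ∧ ∀ R, R₀ ≤ R → ∀ h : r₂ ≤ R,
      indHom (ballInc p h) (ctr p h2) g = 1 := by
  obtain ⟨δ, rfl⟩ := exists_path g
  have h1 : pathClass (δ.map continuous_subtype_val) = pathClass (Path.refl p) := by
    rw [pathClass_refl]
    have hg' : indHom ⟨Subtype.val, continuous_subtype_val⟩ (ctr p h2) (pathClass δ) = 1 := hg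
    rw [indHom_pathClass] at hg'
    exact hg'
  obtain ⟨H⟩ : (δ.map continuous_subtype_val).Homotopic (Path.refl p) :=
    (pathClass_eq_iff _ _).mp h1
  have hb : IsBounded (Set.range ⇑H) := (isCompact_range H.continuous).isBounded
  obtain ⟨R₀, hR₀, hsub⟩ := hb.subset_ball_lt (r₂ + 1) p
  refine ⟨R₀, hR₀.le, fun R hRR h => ?_⟩
  have hball : ∀ z : I × I, H z ∈ ball p R := fun z =>
    ball_subset_ball hRR (hsub (Set.mem_range_self z))
  have hmem : ∀ t, (δ.map continuous_subtype_val) t ∈ ball p R := fun t => by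
    have := hball (0, t)
    rwa [H.apply_zero t] at this
  have hp : p ∈ ball p R := mem_ball_self (by linarith)
  have hhom := homotopic_pathIn H hball hp hp hmem (fun _ => hp)
  have e1 : pathIn (δ.map continuous_subtype_val) hp hp hmem
      = δ.map (ballInc p h).continuous := by ext t; rfl
  have e2 : pathIn (Path.refl p) hp hp (fun _ => hp) = Path.refl (⟨p, hp⟩ : ball p R) := by ext t; rfl
  replace hhom : (δ.map (ballInc p h).continuous).Homotopic (Path.refl (⟨p, hp⟩ : ball p R)) := by
    rw [← e1, ← e2]; exact hhom
  rw [indHom_pathClass, show (1 : FundamentalGroup (ball p R) ((ballInc p h) (ctr p h2)))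
    = pathClass (Path.refl (⟨p, hp⟩ : ball p R)) from (pathClass_refl _).symm]
  exact (pathClass_eq_iff _ _).mpr hhom

end AuxGeo

set_option maxHeartbeats 1000000 in
theorem stmt5 {X : Type u} [MetricSpace X] [CompleteSpace X] (hlen : IsLengthSpace X)
    (p : X) (r : ℝ) (h0 : 0 < r)
    (hfg : Group.FG (G p h0.le (by linarith : r < 2 * r)))
    (hfp : IsFinitelyPresented (cbToAmb p h0.le).range) :
    ∃ R > 0, ∀ γ : Path p p, (∀ t, γ t ∈ closedBall p r) →
      γ.Homotopic (Path.refl p) → NullHomotopicIn γ (ball p R) := by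
  have hr2 : r < 2 * r := by linarith
  have h2 : (0:ℝ) < 2 * r := by linarith
  set Gg := G p h0.le hr2 with hGgdef
  obtain ⟨S, hScl, hSfin⟩ := Group.fg_iff.mp hfg
  haveI : Finite S := hSfin.to_subtype
  let efree : FreeGroup S →* ↥Gg := FreeGroup.lift Subtype.val
  have hes : Function.Surjective efree := by
    rw [← MonoidHom.range_eq_top, FreeGroup.range_lift_eq_closure, Subtype.range_coe]
    exact hScl
  let φ : FreeGroup S →* FundamentalGroup X p := (toAmb p h2).comp (Gg.subtype.comp efree)
  have hcomp : ∀ c : FundamentalGroup (closedBall p r) (pcb p h0.le),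
      toAmb p h2 (indHom (cbInclusion p hr2) (pcb p h0.le) c) = cbToAmb p h0.le c := by
    intro c
    obtain ⟨δ, rfl⟩ := exists_path c
    show indHom ⟨Subtype.val, continuous_subtype_val⟩ _
        (indHom (cbInclusion p hr2) _ (pathClass δ))
      = indHom ⟨Subtype.val, continuous_subtype_val⟩ _ (pathClass δ)
    rw [indHom_pathClass, indHom_pathClass, indHom_pathClass]
    refine (pathClass_eq_iff _ _).mpr ?_
    have : (δ.map (cbInclusion p hr2).continuous).map
        (⟨Subtype.val, continuous_subtype_val⟩ : C(ball p (2*r), X)).continuous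
        = δ.map (⟨Subtype.val, continuous_subtype_val⟩ : C(closedBall p r, X)).continuous := by
      ext t; rfl
    rw [this]
    exact Path.Homotopic.refl _
  have hmemΓ : ∀ v, φ v ∈ (cbToAmb p h0.le).range := by
    intro v
    obtain ⟨c, hc⟩ := (efree v).2
    refine ⟨c, ?_⟩
    show cbToAmb p h0.le c = toAmb p h2 ↑(efree v)
    rw [← hcomp c, hc]
  let φΓ : FreeGroup S →* ↥(cbToAmb p h0.le).range :=
    φ.codRestrict (cbToAmb p h0.le).range hmemΓ
  have hφΓs : Function.Surjective φΓ := by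
    rintro ⟨y, c, rfl⟩
    obtain ⟨v, hv⟩ := hes ⟨indHom (cbInclusion p hr2) (pcb p h0.le) c, ⟨c, rfl⟩⟩
    refine ⟨v, Subtype.ext ?_⟩
    show φ v = cbToAmb p h0.le c
    rw [← hcomp c]
    show toAmb p h2 ↑(efree v) = _
    rw [hv]
  obtain ⟨T, hTfin, hT1, hTker⟩ := tietze hfp φΓ hφΓs
  have hφT : ∀ t ∈ T, φ t = 1 := fun t ht => congrArg Subtype.val (hT1 t ht)
  have hvan : ∀ t : T, ∃ R₀ : ℝ, 2*r + 1 ≤ R₀ ∧ ∀ R, R₀ ≤ R → ∀ h : 2*r ≤ R,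
      indHom (ballInc p h) (ctr p h2) ↑(efree ↑t) = 1 := by
    intro t
    exact vanish p h2 _ (hφT ↑t t.2)
  choose R₀ hR₀ hRkill using hvan
  haveI : Finite T := hTfin.to_subtype
  obtain ⟨B, hB⟩ : ∃ B : ℝ, ∀ t : T, R₀ t ≤ B := by
    obtain ⟨B, hB⟩ := (Set.finite_range R₀).bddAbove
    exact ⟨B, fun t => hB (Set.mem_range_self t)⟩
  set R : ℝ := max B (2*r+1) with hRdef
  have h2R : 2*r ≤ R := le_trans (by linarith) (le_max_right _ _)
  have hRpos : 0 < R := by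
    have := le_max_right B (2*r+1); linarith
  refine ⟨R, hRpos, ?_⟩
  intro γ hγball hγnull
  let γ' : Path (pcb p h0.le) (pcb p h0.le) :=
    pathIn γ (mem_closedBall_self h0.le) (mem_closedBall_self h0.le) hγball
  set c : FundamentalGroup (closedBall p r) (pcb p h0.le) := pathClass γ' with hcdef
  set gg := indHom (cbInclusion p hr2) (pcb p h0.le) c with hggdef
  obtain ⟨w, hw⟩ := hes ⟨gg, ⟨c, rfl⟩⟩
  have hwker : w ∈ φΓ.ker := by
    rw [MonoidHom.mem_ker]
    apply Subtype.ext
    show φ w = 1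
    show toAmb p h2 ↑(efree w) = 1
    rw [hw]
    show toAmb p h2 gg = 1
    rw [hggdef, hcomp c]
    show indHom ⟨Subtype.val, continuous_subtype_val⟩ _ (pathClass γ') = 1
    rw [indHom_pathClass]
    have e0 : γ'.map (⟨Subtype.val, continuous_subtype_val⟩ :
        C(closedBall p r, X)).continuous = γ := by ext t; rfl
    rw [e0]
    exact ((pathClass_eq_iff _ _).mpr hγnull).trans (pathClass_refl p)
  have hwN : w ∈ Subgroup.normalClosure T := hTker hwker
  let χ : FreeGroup S →* FundamentalGroup (ball p R) ((ballInc p h2R) (ctr p h2)) :=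
    (indHom (ballInc p h2R) (ctr p h2)).comp (Gg.subtype.comp efree)
  have hχ1 : ∀ t ∈ T, χ t = 1 := fun t ht =>
    hRkill ⟨t, ht⟩ R (le_trans (hB ⟨t, ht⟩) (le_max_left _ _)) h2R
  have hχN : Subgroup.normalClosure T ≤ χ.ker :=
    Subgroup.normalClosure_le_normal fun t ht => hχ1 t ht
  have hχw : χ w = 1 := hχN hwN
  have hpR : p ∈ ball p R := mem_ball_self hRpos
  have hmem' : ∀ t, γ t ∈ ball p R := fun t =>
    mem_ball.mpr (lt_of_le_of_lt (mem_closedBall.mp (hγball t)) (by linarith))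
  have hχeq : χ w = pathClass (pathIn γ hpR hpR hmem') := by
    show indHom (ballInc p h2R) (ctr p h2) ↑(efree w) = _
    rw [hw]
    show indHom (ballInc p h2R) (ctr p h2)
      (indHom (cbInclusion p hr2) (pcb p h0.le) (pathClass γ')) = _
    rw [indHom_pathClass]
    refine (indHom_pathClass (ballInc p h2R) (ctr p h2) (γ'.map (cbInclusion p hr2).continuous)).trans ?_
    refine congrArg pathClass ?_
    ext t; rfl
  rw [hχeq] at hχw
  have hhomY : (pathIn γ hpR hpR hmem').Homotopic (Path.refl (⟨p, hpR⟩ : ball p R)) := by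
    refine (pathClass_eq_iff _ _).mp ?_
    rw [hχw, pathClass_refl]
    rfl
  obtain ⟨Hy⟩ := hhomY
  have hhomX : HomotopicIn ((pathIn γ hpR hpR hmem').map continuous_subtype_val)
      ((Path.refl (⟨p, hpR⟩ : ball p R)).map continuous_subtype_val) (ball p R) :=
    ⟨homotopyOut Hy, fun z => (Hy z).2⟩
  rw [pathIn_map_val] at hhomX
  have e5 : (Path.refl (⟨p, hpR⟩ : ball p R)).map continuous_subtype_val = Path.refl p := by
    ext t; rfl
  rw [e5] at hhomX
  exact hhomX
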